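/- Let C be a convex subset of ℝ^N (with the coordinatewise order) with nonempty interior and Φ : C → ℝ a convex function continuous on C and Gâteaux differentiable on the interior of C. Then Φ is isotone on C (x ≤ y implies Φ(x) ≤ Φ(y)) if and only if ∇Φ(a) ≥ 0 (all partial derivatives nonnegative) for all a in the interior of C. -/

import Mathlib

open Filter Topology

lemma aux_deriv_nonneg {h : ℝ → ℝ} {d : ℝ} (hd : HasDerivAt h d 0)
    (hle : ∀ᶠ t in 𝓝[>] (0:ℝ), h 0 ≤ h t) : 0 ≤ d := by
  have hs : Tendsto (slope h 0) (𝓝[>] (0:ℝ)) (𝓝 d) :=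
    (hasDerivAt_iff_tendsto_slope.mp hd).mono_left
      (nhdsWithin_mono _ (by intro t ht; exact ne_of_gt ht))
  refine ge_of_tendsto hs ?_
  filter_upwards [hle, self_mem_nhdsWithin] with t ht ht'
  have h0 : (0:ℝ) < t := ht'
  rw [slope_def_field]
  exact div_nonneg (by linarith) (by linarith)

lemma aux_sum_single {N : ℕ} (v : Fin N → ℝ) :
    v = ∑ i, v i • (Pi.single i (1:ℝ) : Fin N → ℝ) := by
  funext j
  simp [Finset.sum_apply, Pi.single_apply]

lemma aux_map_nonneg {N : ℕ} (L : (Fin N → ℝ) →L[ℝ] ℝ) (v : Fin N → ℝ)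
    (hv : 0 ≤ v) (hL : ∀ i, 0 ≤ L (Pi.single i 1)) : 0 ≤ L v := by
  rw [aux_sum_single v, map_sum]
  apply Finset.sum_nonneg
  intro i _
  rw [L.map_smul]
  exact mul_nonneg (hv i) (hL i)

lemma aux_interior_mono {N : ℕ} {C : Set (Fin N → ℝ)} (hCc : Convex ℝ C)
    {Φ : (Fin N → ℝ) → ℝ}
    (hdiff : ∀ a ∈ interior C, DifferentiableAt ℝ Φ a)
    (hgrad : ∀ a ∈ interior C, ∀ i : Fin N, 0 ≤ fderiv ℝ Φ a (Pi.single i 1))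
    {x y : Fin N → ℝ} (hx : x ∈ interior C) (hy : y ∈ interior C) (hxy : x ≤ y) :
    Φ x ≤ Φ y := by
  set g : ℝ → (Fin N → ℝ) := fun t => x + t • (y - x) with hg
  have hgmem : ∀ t ∈ Set.Icc (0:ℝ) 1, g t ∈ interior C := by
    intro t ht
    have : g t = (1 - t) • x + t • y := by
      simp [hg]; module
    rw [this]
    exact hCc.interior hx hy (by linarith [ht.2]) ht.1 (by ring)
  have hderiv : ∀ t ∈ Set.Icc (0:ℝ) 1,
      HasDerivAt (Φ ∘ g) (fderiv ℝ Φ (g t) (y - x)) t := by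
    intro t ht
    have hgd : HasDerivAt g (y - x) t := by
      simpa [hg] using ((hasDerivAt_id t).smul_const (y - x)).const_add x
    exact ((hdiff _ (hgmem t ht)).hasFDerivAt.comp_hasDerivAt t hgd)
  have hmono : MonotoneOn (Φ ∘ g) (Set.Icc (0:ℝ) 1) := by
    apply monotoneOn_of_deriv_nonneg (convex_Icc 0 1)
    · exact fun t ht => ((hderiv t ht).continuousAt).continuousWithinAt
    · intro t ht
      rw [interior_Icc] at ht
      exact ((hderiv t ⟨ht.1.le, ht.2.le⟩).differentiableAt).differentiableWithinAt
    · intro t ht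
      rw [interior_Icc] at ht
      rw [(hderiv t ⟨ht.1.le, ht.2.le⟩).deriv]
      exact aux_map_nonneg _ _ (by simpa using hxy) (hgrad _ (hgmem t ⟨ht.1.le, ht.2.le⟩))
  have h01 := hmono (Set.left_mem_Icc.2 one_pos.le) (Set.right_mem_Icc.2 one_pos.le) one_pos.le
  simpa [hg] using h01

/-- Amann's criterion: a convex function `Φ`, continuous on a convex set `C ⊆ ℝ^N`
(componentwise order) with nonempty interior and Gâteaux differentiable on `int C`,
is isotone on `C` iff its gradient is nonnegative (componentwise) throughout `int C`. -/
theorem stmt6 (N : ℕ) (C : Set (Fin N → ℝ)) (hCc : Convex ℝ C)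
    (hCi : (interior C).Nonempty)
    (Φ : (Fin N → ℝ) → ℝ) (hconv : ConvexOn ℝ C Φ) (hcont : ContinuousOn Φ C)
    (hdiff : ∀ a ∈ interior C, DifferentiableAt ℝ Φ a) :
    MonotoneOn Φ C ↔
      ∀ a ∈ interior C, ∀ i : Fin N, 0 ≤ fderiv ℝ Φ a (Pi.single i 1) := by
  constructor
  · intro hmono a ha i
    set e : Fin N → ℝ := Pi.single i 1 with he
    set g : ℝ → (Fin N → ℝ) := fun t => a + t • e with hg
    have hgd : HasDerivAt g e 0 := by
      simpa [hg] using ((hasDerivAt_id (0:ℝ)).smul_const e).const_add a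
    have hg0 : g 0 = a := by simp [hg]
    have hd : HasDerivAt (Φ ∘ g) (fderiv ℝ Φ a e) 0 := by
      have hF : HasFDerivAt Φ (fderiv ℝ Φ a) (g 0) := hg0 ▸ (hdiff a ha).hasFDerivAt
      exact hF.comp_hasDerivAt 0 hgd
    apply aux_deriv_nonneg hd
    have hcontg : Continuous g := continuous_const.add (continuous_id.smul continuous_const)
    have hnb : ∀ᶠ t in 𝓝 (0:ℝ), g t ∈ interior C := by
      have : g ⁻¹' (interior C) ∈ 𝓝 (0:ℝ) :=
        hcontg.continuousAt.preimage_mem_nhds (isOpen_interior.mem_nhds (by rwa [hg0]))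
      exact this
    filter_upwards [nhdsWithin_le_nhds hnb, self_mem_nhdsWithin] with t ht htpos
    have hle : a ≤ g t := by
      intro j
      simp only [hg, Pi.add_apply, Pi.smul_apply, smul_eq_mul]
      have : 0 ≤ e j := by
        rcases eq_or_ne j i with rfl | hji
        · simp [he]
        · simp [he, Pi.single_apply, hji]
      nlinarith [le_of_lt (show (0:ℝ) < t from htpos)]
    have := hmono (interior_subset ha) (interior_subset ht) hle
    simpa [hg0] using this
  · intro hgrad x hx y hy hxy
    obtain ⟨c, hc⟩ := hCi
    set xt : ℝ → (Fin N → ℝ) := fun t => t • c + (1 - t) • x with hxt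
    set yt : ℝ → (Fin N → ℝ) := fun t => t • c + (1 - t) • y with hyt
    have hxtmem : ∀ t ∈ Set.Ioc (0:ℝ) 1, xt t ∈ interior C := fun t ht =>
      hCc.combo_interior_closure_mem_interior hc (subset_closure hx) ht.1 (by linarith [ht.2])
        (by ring)
    have hytmem : ∀ t ∈ Set.Ioc (0:ℝ) 1, yt t ∈ interior C := fun t ht =>
      hCc.combo_interior_closure_mem_interior hc (subset_closure hy) ht.1 (by linarith [ht.2])
        (by ring)
    have hev : ∀ᶠ t in 𝓝[>] (0:ℝ), t ∈ Set.Ioc (0:ℝ) 1 := by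
      filter_upwards [Ioo_mem_nhdsGT_of_mem (by norm_num : (0:ℝ) ∈ Set.Ico (0:ℝ) 1),
        self_mem_nhdsWithin] with t ht ht'
      exact ⟨ht', ht.2.le⟩
    have hΦle : ∀ᶠ t in 𝓝[>] (0:ℝ), Φ (xt t) ≤ Φ (yt t) := by
      filter_upwards [hev] with t ht
      refine aux_interior_mono hCc hdiff hgrad (hxtmem t ht) (hytmem t ht) ?_
      intro j
      simp only [hxt, hyt, Pi.add_apply, Pi.smul_apply, smul_eq_mul]
      have := hxy j
      nlinarith [ht.2, ht.1.le]
    have hxlim : Tendsto (fun t => Φ (xt t)) (𝓝[>] (0:ℝ)) (𝓝 (Φ x)) := by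
      have hxc : Tendsto xt (𝓝[>] (0:ℝ)) (𝓝 x) := by
        have : Continuous xt :=
          (continuous_id.smul continuous_const).add
            ((continuous_const.sub continuous_id).smul continuous_const)
        have h0 : xt 0 = x := by simp [hxt]
        have h := (this.tendsto 0).mono_left (nhdsWithin_le_nhds (s := Set.Ioi (0:ℝ)))
        rwa [h0] at h
      have hmem : ∀ᶠ t in 𝓝[>] (0:ℝ), xt t ∈ C := by
        filter_upwards [hev] with t ht
        exact interior_subset (hxtmem t ht)
      exact (hcont x hx).tendsto.comp (tendsto_nhdsWithin_iff.mpr ⟨hxc, hmem⟩)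
    have hylim : Tendsto (fun t => Φ (yt t)) (𝓝[>] (0:ℝ)) (𝓝 (Φ y)) := by
      have hyc : Tendsto yt (𝓝[>] (0:ℝ)) (𝓝 y) := by
        have : Continuous yt :=
          (continuous_id.smul continuous_const).add
            ((continuous_const.sub continuous_id).smul continuous_const)
        have h0 : yt 0 = y := by simp [hyt]
        have h := (this.tendsto 0).mono_left (nhdsWithin_le_nhds (s := Set.Ioi (0:ℝ)))
        rwa [h0] at h
      have hmem : ∀ᶠ t in 𝓝[>] (0:ℝ), yt t ∈ C := by
        filter_upwards [hev] with t ht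
        exact interior_subset (hytmem t ht)
      exact (hcont y hy).tendsto.comp (tendsto_nhdsWithin_iff.mpr ⟨hyc, hmem⟩)
    exact le_of_tendsto_of_tendsto hxlim hylim hΦle
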